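/- In the d-dimensional lattice graph, fix t and p ∈ L_t not connected to K_{t+1}^+ (or p ∈ K_t^−). Then there exists u ∈ 𝒰^{(t)} with u_p ≠ 0; consequently span{ J_p^u : u ∈ 𝒰^{(t)} } = span{ 1_{ℰ(p)} }, where 1_{ℰ(p)} ∈ ℝ^{E_t} is the indicator of the edges of E_t incident to p. -/

import Mathlib

noncomputable section
open Classical Finset

namespace DiscreteCalderon

/-- Vertices of the ambient lattice `ℤ^d`. -/
abbrev V (d : ℕ) := Fin d → ℤ

/-- Interior vertex set `D = {x : 1 ≤ x_i ≤ n}`. -/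
def Dset (d n : ℕ) : Set (V d) := {x | ∀ i, 1 ≤ x i ∧ x i ≤ (n : ℤ)}

/-- ℓ¹ distance. -/
def dist1 {d : ℕ} (p q : V d) : ℤ := ∑ i, |p i - q i|

/-- Boundary vertex set `∂D`: vertices at ℓ¹ distance 1 from `D`. -/
def Bset (d n : ℕ) : Set (V d) := {p | p ∉ Dset d n ∧ ∃ q ∈ Dset d n, dist1 p q = 1}

/-- All vertices of the graph, `D ∪ ∂D`. -/
def Vset (d n : ℕ) : Set (V d) := Dset d n ∪ Bset d n

/-- Adjacency of the lattice graph: ℓ¹ distance 1, both endpoints vertices,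
not both on the boundary. -/
def Adj (d n : ℕ) (p q : V d) : Prop :=
  dist1 p q = 1 ∧ p ∈ Vset d n ∧ q ∈ Vset d n ∧ (p ∈ Dset d n ∨ q ∈ Dset d n)

/-- A finite box containing all vertices. -/
def box (d n : ℕ) : Finset (V d) :=
  Fintype.piFinset (fun _ : Fin d => Finset.Icc (0 : ℤ) ((n : ℤ) + 1))

/-- Neighbours of `p` in the graph, as a finite set. -/
def nbr (d n : ℕ) (p : V d) : Finset (V d) := (box d n).filter (fun q => Adj d n p q)

/-- Interior neighbours of `p`. -/
def nbrD (d n : ℕ) (p : V d) : Finset (V d) := (nbr d n p).filter (fun q => q ∈ Dset d n)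

/-- The discrete (weighted) Laplacian `(Δ_γ u)_p = ∑_{q∈N(p)} γ_{qp}(u_q - u_p)`. -/
def lap (d n : ℕ) (γ : V d → V d → ℝ) (u : V d → ℝ) (p : V d) : ℝ :=
  ∑ q ∈ nbr d n p, γ q p * (u q - u p)

/-- The boundary current `(D_γ u)_p = ∑_{q∈N(p)∩D} γ_{pq}(u_q - u_p)`
(there is exactly one interior neighbour of a boundary node). -/
def cur (d n : ℕ) (γ : V d → V d → ℝ) (u : V d → ℝ) (p : V d) : ℝ :=
  ∑ q ∈ nbrD d n p, γ p q * (u q - u p)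

/-- A strictly positive symmetric conductivity. -/
def GoodCond (d n : ℕ) (γ : V d → V d → ℝ) : Prop :=
  (∀ p q, γ p q = γ q p) ∧ ∀ p q, Adj d n p q → 0 < γ p q

/-- The coordinate sum of a lattice point. -/
def sum1 {d : ℕ} (x : V d) : ℤ := ∑ i, x i

/-- Interior diagonal slice `L_t`. -/
def L (d n : ℕ) (t : ℤ) : Set (V d) := {x | x ∈ Dset d n ∧ sum1 x = t}

/-- `L_t^S = ∪_{ℓ ≤ t} L_ℓ`. -/
def LS (d n : ℕ) (t : ℤ) : Set (V d) := {x | x ∈ Dset d n ∧ sum1 x ≤ t}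

/-- Boundary diagonal slice `K_t`. -/
def K (d n : ℕ) (t : ℤ) : Set (V d) := {x | x ∈ Bset d n ∧ sum1 x = t}

/-- `K_t^- = {x ∈ K_t : min_i x_i = 0}`. -/
def Km (d n : ℕ) (t : ℤ) : Set (V d) := {x | x ∈ K d n t ∧ ∃ i, x i = 0}

/-- `K_t^+ = {x ∈ K_t : max_i x_i = n+1}`. -/
def Kp (d n : ℕ) (t : ℤ) : Set (V d) := {x | x ∈ K d n t ∧ ∃ i, x i = (n : ℤ) + 1}

/-- `K_t^{S-} = ∪_{ℓ ≤ t} K_ℓ^-`. -/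
def KSm (d n : ℕ) (t : ℤ) : Set (V d) := {x | x ∈ Bset d n ∧ sum1 x ≤ t ∧ ∃ i, x i = 0}

/-- `K_t^{S+} = ∪_{ℓ ≤ t} K_ℓ^+`. -/
def KSp (d n : ℕ) (t : ℤ) : Set (V d) := {x | x ∈ Bset d n ∧ sum1 x ≤ t ∧ ∃ i, x i = (n : ℤ) + 1}

/-- The lower boundary region `J_t^S = K_t^{S-} ∪ K_{t+1}^{S+}`. -/
def JS (d n : ℕ) (t : ℤ) : Set (V d) := KSm d n t ∪ KSp d n (t + 1)

/-- `J_t = K_t^- ∪ K_{t+1}^+`. -/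
def Jslice (d n : ℕ) (t : ℤ) : Set (V d) := Km d n t ∪ Kp d n (t + 1)

/-- `u` is the γ-harmonic extension of boundary data `φ` (zero-extension convention
outside `D ∪ ∂D`). -/
def IsSol (d n : ℕ) (γ : V d → V d → ℝ) (φ u : V d → ℝ) : Prop :=
  (∀ p, p ∉ Vset d n → u p = 0) ∧
  (∀ p ∈ Dset d n, lap d n γ u p = 0) ∧
  (∀ p ∈ Bset d n, u p = φ p)

/-- The Laplacian row vector `v_p`. -/
def vrow (d n : ℕ) (γ : V d → V d → ℝ) (p : V d) : V d → ℝ := fun q =>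
  if Adj d n p q then γ p q
  else if q = p then -(∑ r ∈ nbr d n p, γ p r) else 0

/-- Restriction of a function to a set (zero outside). -/
def rst {d : ℕ} (S : Set (V d)) (f : V d → ℝ) : V d → ℝ := fun q => if q ∈ S then f q else 0

/-- Euclidean inner product of (vertex-supported) functions. -/
def dot (d n : ℕ) (f g : V d → ℝ) : ℝ := ∑ p ∈ box d n, f p * g p

/-- The localized solution space `𝒰^{(t)}`: restrictions to `L_t^S ∪ J_t^S` of
harmonic extensions of boundary potentials in `ker T₁^{(t)}`. -/
def Uset (d n : ℕ) (γ : V d → V d → ℝ) (t : ℤ) : Set (V d → ℝ) :=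
  {u | (∀ p, p ∉ LS d n t ∪ JS d n t → u p = 0) ∧
    ∃ φ w : V d → ℝ, (∀ p, p ∉ JS d n t → φ p = 0) ∧ IsSol d n γ φ w ∧
      (∀ p ∈ L d n (t + 1), w p = 0) ∧ ∀ p ∈ LS d n t ∪ JS d n t, u p = w p}

/-- The set `E_t` of edges between the consecutive layers:
`E(K_t^-, L_{t+1}) ∪ E(L_t, K_{t+1}^+) ∪ E(L_t, L_{t+1})`. -/
def EdgeT (d n : ℕ) (t : ℤ) (p q : V d) : Prop :=
  Adj d n p q ∧
    ((p ∈ Km d n t ∧ q ∈ L d n (t + 1)) ∨ (q ∈ Km d n t ∧ p ∈ L d n (t + 1)) ∨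
     (p ∈ L d n t ∧ q ∈ Kp d n (t + 1)) ∨ (q ∈ L d n t ∧ p ∈ Kp d n (t + 1)) ∨
     (p ∈ L d n t ∧ q ∈ L d n (t + 1)) ∨ (q ∈ L d n t ∧ p ∈ L d n (t + 1)))

/-- The edge vector `J_p^u ∈ ℝ^{E_t}`, `J_p^u(pq) = u_p - u_q` on edges of `E_t`
incident to `p`, and `0` otherwise (as a symmetric function of edge endpoints). -/
def Jvec (d n : ℕ) (t : ℤ) (u : V d → ℝ) (p : V d) : V d → V d → ℝ := fun a b =>
  if EdgeT d n t a b then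
    (if a = p then u a - u b else if b = p then u b - u a else 0)
  else 0

/-- Inner product of edge functions. -/
def dotE (d n : ℕ) (f g : V d → V d → ℝ) : ℝ :=
  ∑ p ∈ box d n, ∑ q ∈ box d n, f p q * g p q

/- ### auxiliary basics -/

def unit (d : ℕ) (i : Fin d) : V d := fun j => if j = i then 1 else 0

lemma sum1_sub_unit {d : ℕ} (p : V d) (i : Fin d) : sum1 (p - unit d i) = sum1 p - 1 := by
  simp [sum1, unit, Pi.sub_apply, Finset.sum_sub_distrib]

lemma sum1_add_unit {d : ℕ} (p : V d) (i : Fin d) : sum1 (p + unit d i) = sum1 p + 1 := by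
  simp [sum1, unit, Pi.add_apply, Finset.sum_add_distrib]

lemma unit_injective {d : ℕ} {i j : Fin d} (h : unit d i = unit d j) : i = j := by
  by_contra hne
  have := congrFun h i
  simp [unit, hne] at this

lemma sub_unit_inj {d : ℕ} {p q : V d} {i : Fin d} (h : p - unit d i = q - unit d i) : p = q := by
  funext j; have := congrFun h j; simp [Pi.sub_apply] at this; omega

lemma dist1_self {d : ℕ} (p : V d) : dist1 p p = 0 := by simp [dist1]

lemma dist1_comm {d : ℕ} (p q : V d) : dist1 p q = dist1 q p := by
  unfold dist1; congr 1; funext i; exact abs_sub_comm _ _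

lemma dist1_sub_unit {d : ℕ} (p : V d) (i : Fin d) : dist1 p (p - unit d i) = 1 := by
  unfold dist1
  have : ∀ j, |p j - (p - unit d i) j| = if j = i then 1 else 0 := by
    intro j; by_cases h : j = i <;> simp [Pi.sub_apply, unit, h]
  simp only [this]
  simp

lemma eq_add_or_sub_of_dist1 {d : ℕ} {p q : V d} (h : dist1 p q = 1) :
    (∃ i, q = p + unit d i) ∨ ∃ i, q = p - unit d i := by
  have hne : ∃ i, p i ≠ q i := by
    by_contra hc
    push_neg at hc
    have : dist1 p q = 0 := by
      unfold dist1; apply Finset.sum_eq_zero; intro i _; simp [hc i]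
    omega
  obtain ⟨i₀, hi₀⟩ := hne
  have h1 : 1 ≤ |p i₀ - q i₀| := Int.one_le_abs (by omega)
  have hsplit : |p i₀ - q i₀| + ∑ j ∈ Finset.univ.erase i₀, |p j - q j| = 1 := by
    rw [Finset.add_sum_erase Finset.univ (fun j => |p j - q j|) (Finset.mem_univ i₀)]
    exact h
  have hnn : 0 ≤ ∑ j ∈ Finset.univ.erase i₀, |p j - q j| :=
    Finset.sum_nonneg fun j _ => abs_nonneg _
  have hrest : ∑ j ∈ Finset.univ.erase i₀, |p j - q j| = 0 := by omega
  have hothers : ∀ j, j ≠ i₀ → p j = q j := by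
    intro j hj
    have := (Finset.sum_eq_zero_iff_of_nonneg (fun k _ => abs_nonneg (p k - q k))).mp hrest j
      (Finset.mem_erase.mpr ⟨hj, Finset.mem_univ j⟩)
    have := abs_eq_zero.mp this
    omega
  have habs : |p i₀ - q i₀| = 1 := by omega
  rcases abs_eq (by norm_num : (0:ℤ) ≤ 1) |>.mp habs with hc | hc
  · right; exact ⟨i₀, by funext j; by_cases hj : j = i₀ <;>
      simp [Pi.sub_apply, unit, hj] <;> [omega; exact (hothers j hj).symm]⟩
  · left; exact ⟨i₀, by funext j; by_cases hj : j = i₀ <;>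
      simp [Pi.add_apply, unit, hj] <;> [omega; exact (hothers j hj).symm]⟩

lemma mem_box_iff {d n : ℕ} {q : V d} : q ∈ box d n ↔ ∀ i, 0 ≤ q i ∧ q i ≤ (n : ℤ) + 1 := by
  simp [box, Fintype.mem_piFinset, Finset.mem_Icc]

lemma bset_coord {d n : ℕ} {p : V d} (hp : p ∈ Bset d n) :
    ∃ i, (p i = 0 ∨ p i = (n : ℤ) + 1) ∧ ∀ j, j ≠ i → 1 ≤ p j ∧ p j ≤ (n : ℤ) := by
  obtain ⟨hpD, q, hq, hdist⟩ := hp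
  rcases eq_add_or_sub_of_dist1 hdist with ⟨i, hi⟩ | ⟨i, hi⟩
  · -- q = p + unit i, so p = q - unit i
    refine ⟨i, ?_, ?_⟩
    · have hqi := hq i
      have hpi : p i = q i - 1 := by have := congrFun hi i; simp [Pi.add_apply, unit] at this; omega
      have : ¬ (1 ≤ p i ∧ p i ≤ (n:ℤ)) := by
        intro hcon
        exact hpD (fun j => by
          by_cases hj : j = i
          · subst hj; exact hcon
          · have := congrFun hi j; simp [Pi.add_apply, unit, hj] at this
            rw [← this]; exact hq j)
      omega
    · intro j hj
      have := congrFun hi j; simp [Pi.add_apply, unit, hj] at this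
      rw [← this]; exact hq j
  · refine ⟨i, ?_, ?_⟩
    · have hqi := hq i
      have hpi : p i = q i + 1 := by have := congrFun hi i; simp [Pi.sub_apply, unit] at this; omega
      have : ¬ (1 ≤ p i ∧ p i ≤ (n:ℤ)) := by
        intro hcon
        exact hpD (fun j => by
          by_cases hj : j = i
          · subst hj; exact hcon
          · have := congrFun hi j; simp [Pi.sub_apply, unit, hj] at this
            rw [← this]; exact hq j)
      omega
    · intro j hj
      have := congrFun hi j; simp [Pi.sub_apply, unit, hj] at this
      rw [← this]; exact hq j

lemma vset_mem_box {d n : ℕ} {p : V d} (hp : p ∈ Vset d n) : p ∈ box d n := by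
  rw [mem_box_iff]
  rcases hp with hp | hp
  · intro i; have := hp i; omega
  · obtain ⟨i, hi, hoth⟩ := bset_coord hp
    intro j
    by_cases hj : j = i
    · subst hj; omega
    · have := hoth j hj; omega

lemma sub_unit_mem_vset {d n : ℕ} {p : V d} (hp : p ∈ Dset d n) (i : Fin d) :
    p - unit d i ∈ Vset d n := by
  by_cases h2 : 2 ≤ p i
  · left
    intro j
    by_cases hj : j = i
    · subst hj; simp [Pi.sub_apply, unit]; have := hp j; omega
    · simp [Pi.sub_apply, unit, hj]; exact hp j
  · right
    have hpi : p i = 1 := by have := hp i; omega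
    refine ⟨?_, p, hp, ?_⟩
    · intro hc
      have h2 := (hc i).1
      have h3 : (p - unit d i) i = p i - 1 := by simp [Pi.sub_apply, unit]
      omega
    · rw [dist1_comm]; exact dist1_sub_unit p i

lemma adj_sub_unit {d n : ℕ} {p : V d} (hp : p ∈ Dset d n) (i : Fin d) :
    Adj d n (p - unit d i) p :=
  ⟨by rw [dist1_comm]; exact dist1_sub_unit p i, sub_unit_mem_vset hp i, Or.inl hp, Or.inr hp⟩

lemma sub_unit_mem_nbr {d n : ℕ} {p : V d} (hp : p ∈ Dset d n) (i : Fin d) :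
    p - unit d i ∈ nbr d n p := by
  refine Finset.mem_filter.mpr ⟨vset_mem_box (sub_unit_mem_vset hp i), ?_⟩
  exact ⟨dist1_sub_unit p i, Or.inl hp, sub_unit_mem_vset hp i, Or.inl hp⟩

lemma nbr_sum1 {d n : ℕ} {p q : V d} (hq : q ∈ nbr d n p) :
    sum1 q = sum1 p + 1 ∨ sum1 q = sum1 p - 1 := by
  have hadj : Adj d n p q := (Finset.mem_filter.mp hq).2
  rcases eq_add_or_sub_of_dist1 hadj.1 with ⟨i, hi⟩ | ⟨i, hi⟩
  · left; rw [hi, sum1_add_unit]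
  · right; rw [hi, sum1_sub_unit]

lemma sum_nbr_layer {d n : ℕ} {p : V d} (hp : p ∈ Dset d n) (F g : V d → ℝ)
    (hg : ∀ q, g q ≠ 0 → sum1 q = sum1 p - 1) :
    ∑ q ∈ nbr d n p, F q * g q = ∑ i : Fin d, F (p - unit d i) * g (p - unit d i) := by
  have hinj : ∀ i ∈ (Finset.univ : Finset (Fin d)), ∀ j ∈ Finset.univ,
      p - unit d i = p - unit d j → i = j := by
    intro i _ j _ h
    have hk := congrFun h i
    simp only [Pi.sub_apply, unit] at hk
    by_contra hne
    simp [hne] at hk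
  rw [← Finset.sum_image (f := fun q => F q * g q) (g := fun i => p - unit d i) hinj]
  apply (Finset.sum_subset ?_ ?_).symm
  · intro q hq
    simp only [Finset.mem_image] at hq
    obtain ⟨i, _, rfl⟩ := hq
    exact sub_unit_mem_nbr hp i
  · intro q hq hnq
    by_cases hgq : g q = 0
    · simp [hgq]
    · exfalso
      have hs := hg q hgq
      have hadj : Adj d n p q := (Finset.mem_filter.mp hq).2
      rcases eq_add_or_sub_of_dist1 hadj.1 with ⟨i, hi⟩ | ⟨i, hi⟩
      · rw [hi, sum1_add_unit] at hs; omega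
      · exact hnq (Finset.mem_image.mpr ⟨i, Finset.mem_univ i, hi.symm⟩)

lemma dset_sum1_ge {d n : ℕ} {p : V d} (hp : p ∈ Dset d n) : (d : ℤ) ≤ sum1 p := by
  calc (d : ℤ) = ∑ _i : Fin d, (1 : ℤ) := by simp
  _ ≤ sum1 p := Finset.sum_le_sum fun i _ => (hp i).1


/- ### the key surjectivity lemma -/

def wgt (d : ℕ) (i : Fin d) : ℤ := 2 ^ (d - 1 - i.val)

def rk {d : ℕ} (p : V d) : ℤ := ∑ i, p i * wgt d i

lemma wgt_pos {d : ℕ} (i : Fin d) : 0 < wgt d i := pow_pos (by norm_num) _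

lemma rk_sub_unit {d : ℕ} (p : V d) (i : Fin d) : rk (p - unit d i) = rk p - wgt d i := by
  have h : ∀ j, ((p - unit d i) j) * wgt d j
      = p j * wgt d j - (if j = i then wgt d j else 0) := by
    intro j; by_cases hj : j = i <;> simp [Pi.sub_apply, unit, hj] <;> ring
  simp only [rk, h, Finset.sum_sub_distrib, Finset.sum_ite_eq' Finset.univ i]
  simp

lemma rk_add_unit {d : ℕ} (p : V d) (i : Fin d) : rk (p + unit d i) = rk p + wgt d i := by
  have h : ∀ j, ((p + unit d i) j) * wgt d j
      = p j * wgt d j + (if j = i then wgt d j else 0) := by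
    intro j; by_cases hj : j = i <;> simp [Pi.add_apply, unit, hj] <;> ring
  simp only [rk, h, Finset.sum_add_distrib, Finset.sum_ite_eq' Finset.univ i]
  simp

lemma wgt_le_one {d : ℕ} {i : Fin d} (h : wgt d i ≤ 1) : i.val = d - 1 := by
  by_contra hne
  have h1 : i.val < d := i.2
  have h2 : 1 ≤ d - 1 - i.val := by omega
  have : (2 : ℤ) ^ 1 ≤ 2 ^ (d - 1 - i.val) := pow_le_pow_right₀ (by norm_num) h2
  simp only [wgt] at h
  omega

lemma wgt_le_first {d : ℕ} (i : Fin d) : wgt d i ≤ 2 ^ (d - 1) :=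
  pow_le_pow_right₀ (by norm_num) (by omega)

lemma wgt_ge_first {d : ℕ} {i : Fin d} (h : (2 : ℤ) ^ (d - 1) ≤ wgt d i) : i.val = 0 := by
  have := pow_le_pow_iff_right₀ (a := (2:ℤ)) (by norm_num) |>.mp h
  omega

lemma key {d : ℕ} (hd : 2 ≤ d) (γ : V d → V d → ℝ) (P : Finset (V d))
    (hpos : ∀ p ∈ P, ∀ i : Fin d, 0 < γ (p - unit d i) p)
    (p₀ : V d) (b : V d → ℝ) (b₀ : ℝ) :
    ∃ x : V d → ℝ, x p₀ = b₀ ∧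
      ∀ p ∈ P, ∑ i : Fin d, γ (p - unit d i) p * x (p - unit d i) = b p := by
  classical
  let Φ : (V d → ℝ) →ₗ[ℝ] (Option {p : V d // p ∈ P} → ℝ) :=
    { toFun := fun x o => Option.elim o (x p₀)
        (fun p => ∑ i : Fin d, γ (p.1 - unit d i) p.1 * x (p.1 - unit d i))
      map_add' := by
        intro x y; funext o
        cases o <;> simp [Pi.add_apply, mul_add, Finset.sum_add_distrib]
      map_smul' := by
        intro cs x; funext o
        cases o with
        | none => simp
        | some p =>
          simp only [Option.elim, Pi.smul_apply, smul_eq_mul, RingHom.id_apply]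
          rw [Finset.mul_sum]
          exact Finset.sum_congr rfl fun i _ => by ring }
  have hΦnone : ∀ x, Φ x none = x p₀ := fun _ => rfl
  have hΦsome : ∀ x (p : {p : V d // p ∈ P}), Φ x (some p)
      = ∑ i : Fin d, γ (p.1 - unit d i) p.1 * x (p.1 - unit d i) := fun _ _ => rfl
  have hsurj : LinearMap.range Φ = ⊤ := by
    by_contra hne
    obtain ⟨f, hf0, hfbot⟩ := Submodule.exists_dual_map_eq_bot_of_lt_top
      (lt_top_iff_ne_top.mpr hne) inferInstance
    have hvan : ∀ x : V d → ℝ, f (Φ x) = 0 := by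
      intro x
      have hmem : f (Φ x) ∈ (LinearMap.range Φ).map f :=
        Submodule.mem_map_of_mem (LinearMap.mem_range_self Φ x)
      rw [hfbot] at hmem
      exact (Submodule.mem_bot ℝ).mp hmem
    set c : Option {p : V d // p ∈ P} → ℝ :=
      fun o => f (fun o' => if o = o' then 1 else 0) with hcdef
    have hrep : ∀ z : Option {p : V d // p ∈ P} → ℝ, f z = ∑ o, z o * c o := by
      intro z
      conv_lhs => rw [pi_eq_sum_univ z]
      rw [map_sum]
      exact Finset.sum_congr rfl fun o _ => by rw [map_smul, smul_eq_mul]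
    set cc : V d → ℝ := fun p => if h : p ∈ P then c (some ⟨p, h⟩) else 0 with hccdef
    have hcc : ∀ p : {p : V d // p ∈ P}, c (some p) = cc p.1 := by
      intro p; simp [hccdef, p.2]
    have H2 : ∀ x : V d → ℝ,
        x p₀ * c none +
          ∑ p ∈ P, (∑ i : Fin d, γ (p - unit d i) p * x (p - unit d i)) * cc p = 0 := by
      intro x
      have hv := hvan x
      rw [hrep (Φ x), univ_option, Finset.sum_insertNone] at hv
      have h3 : ∑ p : {p : V d // p ∈ P}, Φ x (some p) * c (some p)
          = ∑ p ∈ P, (∑ i : Fin d, γ (p - unit d i) p * x (p - unit d i)) * cc p := by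
        rw [← Finset.sum_coe_sort P
          (fun p => (∑ i : Fin d, γ (p - unit d i) p * x (p - unit d i)) * cc p)]
        exact Finset.sum_congr rfl fun p _ => by rw [hΦsome, hcc]
      rw [h3, hΦnone] at hv
      exact hv
    -- a single evaluation step used for both max and min
    have hstep : ∀ pp ∈ P, ∀ k : Fin d,
        (∀ p ∈ P, cc p ≠ 0 → ∀ i : Fin d, p - unit d i = pp - unit d k → p = pp) →
        (if p₀ = pp - unit d k then (1:ℝ) else 0) * c none
          + γ (pp - unit d k) pp * cc pp = 0 := by
      intro pp hpp k hk
      have hx := H2 (fun r => if r = pp - unit d k then (1:ℝ) else 0)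
      have hsum : ∑ p ∈ P, (∑ i : Fin d, γ (p - unit d i) p *
            (if p - unit d i = pp - unit d k then (1:ℝ) else 0)) * cc p
          = γ (pp - unit d k) pp * cc pp := by
        rw [Finset.sum_eq_single_of_mem pp hpp]
        · congr 1
          rw [Finset.sum_eq_single_of_mem k (Finset.mem_univ k)]
          · simp
          · intro i _ hik
            have : ¬ (pp - unit d i = pp - unit d k) := by
              intro he
              have : unit d i = unit d k := by
                funext j
                have := congrFun he j
                simp only [Pi.sub_apply] at this
                omega
              exact hik (unit_injective this)
            simp [this]
        · intro p hpP hpne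
          by_cases hcp : cc p = 0
          · simp [hcp]
          · have : ∀ i : Fin d, ¬ (p - unit d i = pp - unit d k) := by
              intro i he
              exact hpne (hk p hpP hcp i he)
            have hz : ∑ i : Fin d, γ (p - unit d i) p *
                (if p - unit d i = pp - unit d k then (1:ℝ) else 0) = 0 := by
              apply Finset.sum_eq_zero
              intro i _
              simp [this i]
            rw [hz, zero_mul]
      rw [hsum] at hx
      exact hx
    have hccP : ∀ p ∈ P, cc p = 0 := by
      by_contra hcon
      push_neg at hcon
      set Q : Finset (V d) := P.filter (fun p => cc p ≠ 0) with hQdef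
      have hQne : Q.Nonempty := by
        obtain ⟨p, hp, hcp⟩ := hcon
        exact ⟨p, Finset.mem_filter.mpr ⟨hp, hcp⟩⟩
      obtain ⟨pmax, hpmaxQ, hmax⟩ := Q.exists_max_image rk hQne
      obtain ⟨pmin, hpminQ, hmin⟩ := Q.exists_min_image rk hQne
      have hpmaxP : pmax ∈ P := (Finset.mem_filter.mp hpmaxQ).1
      have hpmaxc : cc pmax ≠ 0 := (Finset.mem_filter.mp hpmaxQ).2
      have hpminP : pmin ∈ P := (Finset.mem_filter.mp hpminQ).1
      have hpminc : cc pmin ≠ 0 := (Finset.mem_filter.mp hpminQ).2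
      have hlast : (d - 1 : ℕ) < d := by omega
      have hfirst : (0 : ℕ) < d := by omega
      set kl : Fin d := ⟨d - 1, hlast⟩
      set kf : Fin d := ⟨0, hfirst⟩
      have hwl : wgt d kl = 1 := by simp [wgt, kl]
      have hwf : wgt d kf = 2 ^ (d - 1) := by simp [wgt, kf]
      -- max equation
      have hmaxeq := hstep pmax hpmaxP kl ?_
      rotate_left
      · intro p hpP hcp i he
        have hQp : p ∈ Q := Finset.mem_filter.mpr ⟨hpP, hcp⟩
        have hr : rk p - wgt d i = rk pmax - wgt d kl := by
          rw [← rk_sub_unit, ← rk_sub_unit, he]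
        have hle : rk p ≤ rk pmax := hmax p hQp
        have : wgt d i ≤ 1 := by rw [hwl] at hr; omega
        have : i = kl := Fin.ext (by rw [wgt_le_one this])
        subst this
        exact sub_unit_inj he
      -- min equation
      have hmineq := hstep pmin hpminP kf ?_
      rotate_left
      · intro p hpP hcp i he
        have hQp : p ∈ Q := Finset.mem_filter.mpr ⟨hpP, hcp⟩
        have hr : rk p - wgt d i = rk pmin - wgt d kf := by
          rw [← rk_sub_unit, ← rk_sub_unit, he]
        have hge : rk pmin ≤ rk p := hmin p hQp
        have h1 : (2:ℤ) ^ (d - 1) ≤ wgt d i := by rw [hwf] at hr; omega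
        have : i = kf := Fin.ext (by rw [wgt_ge_first h1])
        subst this
        exact sub_unit_inj he
      have hγmax := hpos pmax hpmaxP kl
      have hγmin := hpos pmin hpminP kf
      have hp0max : p₀ = pmax - unit d kl := by
        by_contra hne'
        rw [if_neg hne', zero_mul, zero_add] at hmaxeq
        rcases mul_eq_zero.mp hmaxeq with h | h
        · exact absurd h (ne_of_gt hγmax)
        · exact hpmaxc h
      have hp0min : p₀ = pmin - unit d kf := by
        by_contra hne'
        rw [if_neg hne', zero_mul, zero_add] at hmineq
        rcases mul_eq_zero.mp hmineq with h | h
        · exact absurd h (ne_of_gt hγmin)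
        · exact hpminc h
      have hpmax' : pmax = p₀ + unit d kl := by
        rw [hp0max]; funext j; simp [Pi.sub_apply, Pi.add_apply]
      have hpmin' : pmin = p₀ + unit d kf := by
        rw [hp0min]; funext j; simp [Pi.sub_apply, Pi.add_apply]
      have hcompare : rk pmin ≤ rk pmax := hmin pmax hpmaxQ
      rw [hpmax', hpmin', rk_add_unit, rk_add_unit, hwl, hwf] at hcompare
      have : (2:ℤ) ^ 1 ≤ 2 ^ (d - 1) := pow_le_pow_right₀ (by norm_num) (by omega)
      omega
    -- now c none = 0 and hence f = 0
    have hnone : c none = 0 := by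
      have hx := H2 (fun r => if r = p₀ then (1:ℝ) else 0)
      rw [Finset.sum_eq_zero (fun p hp => by rw [hccP p hp, mul_zero])] at hx
      simp at hx
      exact hx
    apply hf0
    apply LinearMap.ext
    intro z
    rw [hrep z]
    simp only [LinearMap.zero_apply]
    apply Finset.sum_eq_zero
    intro o _
    cases o with
    | none => rw [hnone, mul_zero]
    | some p => rw [hcc, hccP p.1 p.2, mul_zero]
  -- use surjectivity
  have hs : Function.Surjective Φ := LinearMap.range_eq_top.mp hsurj
  obtain ⟨x, hx⟩ := hs (fun o => Option.elim o b₀ (fun p => b p.1))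
  refine ⟨x, ?_, ?_⟩
  · have := congrFun hx none
    rwa [hΦnone] at this
  · intro p hp
    have := congrFun hx (some ⟨p, hp⟩)
    rwa [hΦsome] at this


lemma lap_add (d n : ℕ) (γ : V d → V d → ℝ) (w x : V d → ℝ) (p : V d) :
    lap d n γ (fun q => w q + x q) p = lap d n γ w p + lap d n γ x p := by
  unfold lap
  rw [← Finset.sum_add_distrib]
  exact Finset.sum_congr rfl fun q _ => by ring

lemma exists_w (d n : ℕ) (hd : 2 ≤ d) (γ : V d → V d → ℝ) (hγ : GoodCond d n γ)
    (t : ℤ) (ht1 : (d : ℤ) - 1 ≤ t)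
    (p₀ : V d) (hp₀V : p₀ ∈ Vset d n) (hp₀s : sum1 p₀ = t) :
    ∃ w : V d → ℝ, (∀ q, w q ≠ 0 → q ∈ Vset d n ∧ sum1 q ≤ t) ∧ w p₀ = 1 ∧
      ∀ p ∈ Dset d n, lap d n γ w p = 0 := by
  have main : ∀ m : ℕ, ∃ w : V d → ℝ,
      (∀ q, w q ≠ 0 → q ∈ Vset d n ∧ sum1 q ≤ t) ∧ w p₀ = 1 ∧
      ∀ p ∈ Dset d n, t - (m : ℤ) < sum1 p → lap d n γ w p = 0 := by
    intro m
    induction m with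
    | zero =>
      set P : Finset (V d) := (box d n).filter
        (fun p => p ∈ Dset d n ∧ sum1 p = t + 1) with hPdef
      have hPD : ∀ p ∈ P, p ∈ Dset d n ∧ sum1 p = t + 1 :=
        fun p hp => (Finset.mem_filter.mp hp).2
      have hpos : ∀ p ∈ P, ∀ i : Fin d, 0 < γ (p - unit d i) p :=
        fun p hp i => hγ.2 _ _ (adj_sub_unit (hPD p hp).1 i)
      obtain ⟨x, hx0, hxeq⟩ := key hd γ P hpos p₀ (fun _ => 0) 1
      set w : V d → ℝ := fun q => if q ∈ Vset d n ∧ sum1 q = t then x q else 0 with hwdef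
      have hwsupp : ∀ q, w q ≠ 0 → q ∈ Vset d n ∧ sum1 q = t := by
        intro q hq
        by_contra hc
        rw [hwdef] at hq
        simp only [if_neg hc] at hq
        exact hq rfl
      refine ⟨w, fun q hq => ⟨(hwsupp q hq).1, le_of_eq (hwsupp q hq).2⟩, ?_, ?_⟩
      · rw [hwdef]; simp only [if_pos (⟨hp₀V, hp₀s⟩ : p₀ ∈ Vset d n ∧ sum1 p₀ = t)]; exact hx0
      · intro p hpD hps
        have hwp : w p = 0 := by
          by_contra hc
          have := (hwsupp p hc).2
          omega
        have hlap1 : lap d n γ w p = ∑ q ∈ nbr d n p, γ q p * w q := by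
          unfold lap
          exact Finset.sum_congr rfl fun q _ => by rw [hwp, sub_zero]
        rcases (by omega : sum1 p = t + 1 ∨ t + 2 ≤ sum1 p) with hcase | hcase
        · have hpP : p ∈ P := Finset.mem_filter.mpr
            ⟨vset_mem_box (Or.inl hpD), hpD, hcase⟩
          rw [hlap1, sum_nbr_layer hpD (fun q => γ q p) w
            (fun q hq => by rw [(hwsupp q hq).2]; omega)]
          have : ∀ i : Fin d, w (p - unit d i) = x (p - unit d i) := by
            intro i
            rw [hwdef]
            simp only [if_pos (⟨sub_unit_mem_vset hpD i,
              by rw [sum1_sub_unit]; omega⟩ : p - unit d i ∈ Vset d n ∧ sum1 (p - unit d i) = t)]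
          rw [Finset.sum_congr rfl fun i _ => by rw [this i]]
          exact hxeq p hpP
        · rw [hlap1]
          apply Finset.sum_eq_zero
          intro q hq
          have hwq : w q = 0 := by
            by_contra hc
            have h1 := (hwsupp q hc).2
            rcases nbr_sum1 hq with h2 | h2 <;> omega
          rw [hwq, mul_zero]
    | succ m ih =>
      obtain ⟨w, hwsupp, hwp₀, hwlap⟩ := ih
      set P : Finset (V d) := (box d n).filter
        (fun p => p ∈ Dset d n ∧ sum1 p = t - m) with hPdef
      have hPD : ∀ p ∈ P, p ∈ Dset d n ∧ sum1 p = t - m :=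
        fun p hp => (Finset.mem_filter.mp hp).2
      have hpos : ∀ p ∈ P, ∀ i : Fin d, 0 < γ (p - unit d i) p :=
        fun p hp i => hγ.2 _ _ (adj_sub_unit (hPD p hp).1 i)
      obtain ⟨x', hx0', hxeq'⟩ := key hd γ P hpos p₀ (fun p => - lap d n γ w p) 0
      set x : V d → ℝ := fun q =>
        if q ∈ Vset d n ∧ sum1 q = t - m - 1 then x' q else 0 with hxdef
      have hxsupp : ∀ q, x q ≠ 0 → q ∈ Vset d n ∧ sum1 q = t - m - 1 := by
        intro q hq
        by_contra hc
        rw [hxdef] at hq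
        simp only [if_neg hc] at hq
        exact hq rfl
      have hxeq : ∀ p ∈ P, ∑ i : Fin d, γ (p - unit d i) p * x (p - unit d i)
          = - lap d n γ w p := by
        intro p hp
        have h1 : ∀ i : Fin d, x (p - unit d i) = x' (p - unit d i) := by
          intro i
          rw [hxdef]
          simp only [if_pos (⟨sub_unit_mem_vset (hPD p hp).1 i,
            by rw [sum1_sub_unit, (hPD p hp).2]⟩ :
            p - unit d i ∈ Vset d n ∧ sum1 (p - unit d i) = t - m - 1)]
        rw [Finset.sum_congr rfl fun i _ => by rw [h1 i]]
        exact hxeq' p hp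
      refine ⟨fun q => w q + x q, ?_, ?_, ?_⟩
      · intro q hq
        have hq' : w q + x q ≠ 0 := hq
        by_cases hw : w q = 0
        · have hx : x q ≠ 0 := by intro hx; rw [hw, hx] at hq'; simp at hq'
          have := hxsupp q hx
          exact ⟨this.1, by omega⟩
        · have := hwsupp q hw
          by_cases hx : x q = 0
          · exact this
          · exact ⟨this.1, this.2⟩
      · have hxp₀ : x p₀ = 0 := by
          by_contra hc
          have := (hxsupp p₀ hc).2
          omega
        show w p₀ + x p₀ = 1
        rw [hwp₀, hxp₀]; ring
      · intro p hpD hps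
        rw [lap_add]
        have hxp : x p = 0 := by
          by_contra hc
          have := (hxsupp p hc).2
          push_cast at hps
          omega
        rcases (by push_cast at hps ⊢; omega : sum1 p = t - m ∨ t - (m:ℤ) < sum1 p)
          with hcase | hcase
        · have hpP : p ∈ P := Finset.mem_filter.mpr
            ⟨vset_mem_box (Or.inl hpD), hpD, hcase⟩
          have hlapx : lap d n γ x p = ∑ q ∈ nbr d n p, γ q p * x q := by
            unfold lap
            exact Finset.sum_congr rfl fun q _ => by rw [hxp, sub_zero]
          rw [hlapx, sum_nbr_layer hpD (fun q => γ q p) x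
            (fun q hq => by rw [(hxsupp q hq).2]; omega), hxeq p hpP]
          ring
        · rw [hwlap p hpD hcase]
          have hlapx : lap d n γ x p = 0 := by
            unfold lap
            apply Finset.sum_eq_zero
            intro q hq
            have hxq : x q = 0 := by
              by_contra hc
              have h1 := (hxsupp q hc).2
              rcases nbr_sum1 hq with h2 | h2 <;> omega
            rw [hxq, hxp, sub_zero, mul_zero]
          rw [hlapx]; ring
  obtain ⟨w, h1, h2, h3⟩ := main (t + 1 - d).toNat
  refine ⟨w, h1, h2, fun p hp => h3 p hp ?_⟩
  have hge := dset_sum1_ge hp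
  have : ((t + 1 - d).toNat : ℤ) = t + 1 - d := Int.toNat_of_nonneg (by omega)
  omega


/- ### assembling the solution -/

lemma adj_symm {d n : ℕ} {p q : V d} (h : Adj d n p q) : Adj d n q p :=
  ⟨by rw [dist1_comm]; exact h.1, h.2.2.1, h.2.1, h.2.2.2.symm⟩

lemma bset_low_mem_JS {d n : ℕ} {t : ℤ} {p : V d} (hp : p ∈ Bset d n)
    (hs : sum1 p ≤ t) : p ∈ JS d n t := by
  obtain ⟨i, hi, -⟩ := bset_coord hp
  rcases hi with hi | hi
  · exact Or.inl ⟨hp, hs, i, hi⟩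
  · exact Or.inr ⟨hp, by omega, i, hi⟩

lemma exists_u (d n : ℕ) (hd : 2 ≤ d) (γ : V d → V d → ℝ) (hγ : GoodCond d n γ)
    (t : ℤ) (ht1 : (d : ℤ) - 1 ≤ t)
    (p₀ : V d) (hp₀V : p₀ ∈ Vset d n) (hp₀s : sum1 p₀ = t)
    (hp₀m : p₀ ∈ LS d n t ∪ JS d n t) :
    ∃ u ∈ Uset d n γ t, u p₀ = 1 := by
  obtain ⟨w, hwsupp, hwp₀, hwlap⟩ := exists_w d n hd γ hγ t ht1 p₀ hp₀V hp₀s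
  set u : V d → ℝ := fun q => if q ∈ LS d n t ∪ JS d n t then w q else 0 with hudef
  set φ : V d → ℝ := fun q => if q ∈ Bset d n then w q else 0 with hφdef
  refine ⟨u, ⟨?_, φ, w, ?_, ⟨?_, hwlap, ?_⟩, ?_, ?_⟩, ?_⟩
  · intro p hp; rw [hudef]; simp only [if_neg hp]
  · intro p hp
    rw [hφdef]
    by_cases hb : p ∈ Bset d n
    · simp only [if_pos hb]
      by_contra hc
      exact hp (bset_low_mem_JS hb (hwsupp p hc).2)
    · simp only [if_neg hb]
  · intro p hp
    by_contra hc
    exact hp (hwsupp p hc).1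
  · intro p hp
    rw [hφdef]; simp only [if_pos hp]
  · intro p hp
    by_contra hc
    have h1 := (hwsupp p hc).2
    have h2 := hp.2
    omega
  · intro p hp; rw [hudef]; simp only [if_pos hp]
  · rw [hudef]; simp only [if_pos hp₀m]; exact hwp₀


/- ### the span computation -/

lemma L_not_in_dom {d n : ℕ} {t : ℤ} {b : V d} (hb : b ∈ L d n (t + 1)) :
    b ∉ LS d n t ∪ JS d n t := by
  rintro (h | h | h)
  · have := hb.2; have := h.2; omega
  · exact h.1.1 hb.1
  · exact h.1.1 hb.1

lemma partner_left {d n : ℕ} {t : ℤ} {p₀ : V d}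
    (hp₀ : (p₀ ∈ L d n t ∧ ∀ q ∈ Kp d n (t + 1), ¬ Adj d n p₀ q) ∨ p₀ ∈ Km d n t)
    {a b : V d} (he : EdgeT d n t a b) (hap : a = p₀) : b ∈ L d n (t + 1) := by
  subst hap
  rcases hp₀ with ⟨hL, hK⟩ | hKm
  · rcases he.2 with ⟨h1, h2⟩ | ⟨h1, h2⟩ | ⟨h1, h2⟩ | ⟨h1, h2⟩ | ⟨h1, h2⟩ | ⟨h1, h2⟩
    · exact absurd hL.1 h1.1.1.1
    · have := h2.2; have := hL.2; omega
    · exact absurd he.1 (hK b h2)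
    · exact absurd hL.1 h2.1.1.1
    · exact h2
    · have := h2.2; have := hL.2; omega
  · rcases he.2 with ⟨h1, h2⟩ | ⟨h1, h2⟩ | ⟨h1, h2⟩ | ⟨h1, h2⟩ | ⟨h1, h2⟩ | ⟨h1, h2⟩
    · exact h2
    · exact absurd h2.1 hKm.1.1.1
    · exact absurd h1.1 hKm.1.1.1
    · have := h2.1.2; have := hKm.1.2; omega
    · exact absurd h1.1 hKm.1.1.1
    · exact absurd h2.1 hKm.1.1.1

lemma partner_right {d n : ℕ} {t : ℤ} {p₀ : V d}
    (hp₀ : (p₀ ∈ L d n t ∧ ∀ q ∈ Kp d n (t + 1), ¬ Adj d n p₀ q) ∨ p₀ ∈ Km d n t)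
    {a b : V d} (he : EdgeT d n t a b) (hbp : b = p₀) : a ∈ L d n (t + 1) := by
  subst hbp
  rcases hp₀ with ⟨hL, hK⟩ | hKm
  · rcases he.2 with ⟨h1, h2⟩ | ⟨h1, h2⟩ | ⟨h1, h2⟩ | ⟨h1, h2⟩ | ⟨h1, h2⟩ | ⟨h1, h2⟩
    · have := h2.2; have := hL.2; omega
    · exact h2
    · exact absurd hL.1 h2.1.1.1
    · exact absurd he.1 (fun hadj => hK a h2 (adj_symm hadj))
    · have := h2.2; have := hL.2; omega
    · exact h2
  · rcases he.2 with ⟨h1, h2⟩ | ⟨h1, h2⟩ | ⟨h1, h2⟩ | ⟨h1, h2⟩ | ⟨h1, h2⟩ | ⟨h1, h2⟩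
    · exact absurd h2.1 hKm.1.1.1
    · exact h2
    · have := h2.1.2; have := hKm.1.2; omega
    · exact absurd h1.1 hKm.1.1.1
    · exact absurd h2.1 hKm.1.1.1
    · exact h2

lemma jvec_smul {d n : ℕ} {γ : V d → V d → ℝ} {t : ℤ} {p₀ : V d}
    (hp₀ : (p₀ ∈ L d n t ∧ ∀ q ∈ Kp d n (t + 1), ¬ Adj d n p₀ q) ∨ p₀ ∈ Km d n t)
    {u : V d → ℝ} (hu : u ∈ Uset d n γ t) :
    Jvec d n t u p₀ = u p₀ •
      (fun a b => if EdgeT d n t a b ∧ (a = p₀ ∨ b = p₀) then (1 : ℝ) else 0) := by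
  funext a b
  simp only [Jvec, Pi.smul_apply, smul_eq_mul]
  by_cases he : EdgeT d n t a b
  · rw [if_pos he]
    by_cases hap : a = p₀
    · have hb := partner_left hp₀ he hap
      have hub : u b = 0 := hu.1 b (L_not_in_dom hb)
      rw [if_pos hap, if_pos ⟨he, Or.inl hap⟩, hub, hap, mul_one, sub_zero]
    · by_cases hbp : b = p₀
      · have ha := partner_right hp₀ he hbp
        have hua : u a = 0 := hu.1 a (L_not_in_dom ha)
        rw [if_neg hap, if_pos hbp, if_pos ⟨he, Or.inr hbp⟩, hua, hbp, mul_one, sub_zero]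
      · rw [if_neg hap, if_neg hbp,
          if_neg (fun hc => hc.2.elim hap hbp), mul_zero]
  · rw [if_neg he, if_neg (fun hc => he hc.1), mul_zero]


/-- for `p₀ ∈ L_t` with no neighbour in `K_{t+1}^+` (or `p₀ ∈ K_t^-`),
there is `u ∈ 𝒰^{(t)}` with `u_{p₀} ≠ 0`, and
`span{ J_{p₀}^u : u ∈ 𝒰^{(t)} } = span{ 1_{ℰ(p₀)} }`. -/
theorem stmt16 (d n : ℕ) (hd : 2 ≤ d) (hn : 1 ≤ n)
    (γ : V d → V d → ℝ) (hγ : GoodCond d n γ)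
    (t : ℤ) (ht1 : (d : ℤ) - 1 ≤ t) (ht2 : t ≤ (d : ℤ) * n - 1)
    (p₀ : V d)
    (hp₀ : (p₀ ∈ L d n t ∧ ∀ q ∈ Kp d n (t + 1), ¬ Adj d n p₀ q) ∨ p₀ ∈ Km d n t) :
    (∃ u ∈ Uset d n γ t, u p₀ ≠ 0) ∧
    Submodule.span ℝ {f : V d → V d → ℝ | ∃ u ∈ Uset d n γ t, f = Jvec d n t u p₀}
      = Submodule.span ℝ
        ({fun a b => if EdgeT d n t a b ∧ (a = p₀ ∨ b = p₀) then (1 : ℝ) else 0} :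
          Set (V d → V d → ℝ)) := by
  have hp₀V : p₀ ∈ Vset d n := by
    rcases hp₀ with ⟨hL, -⟩ | hKm
    · exact Or.inl hL.1
    · exact Or.inr hKm.1.1
  have hp₀s : sum1 p₀ = t := by
    rcases hp₀ with ⟨hL, -⟩ | hKm
    · exact hL.2
    · exact hKm.1.2
  have hp₀m : p₀ ∈ LS d n t ∪ JS d n t := by
    rcases hp₀ with ⟨hL, -⟩ | hKm
    · exact Or.inl ⟨hL.1, le_of_eq hL.2⟩
    · exact Or.inr (Or.inl ⟨hKm.1.1, le_of_eq hKm.1.2, hKm.2⟩)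
  obtain ⟨u₀, hu₀U, hu₀p⟩ := exists_u d n hd γ hγ t ht1 p₀ hp₀V hp₀s hp₀m
  constructor
  · exact ⟨u₀, hu₀U, by rw [hu₀p]; norm_num⟩
  · apply le_antisymm
    · rw [Submodule.span_le]
      rintro f ⟨u, hu, rfl⟩
      rw [jvec_smul hp₀ hu]
      exact Submodule.smul_mem _ _ (Submodule.subset_span rfl)
    · rw [Submodule.span_le]
      rintro f hf
      rw [Set.mem_singleton_iff] at hf
      subst hf
      have : Jvec d n t u₀ p₀ = (fun a b =>
          if EdgeT d n t a b ∧ (a = p₀ ∨ b = p₀) then (1 : ℝ) else 0) := by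
        rw [jvec_smul hp₀ hu₀U, hu₀p, one_smul]
      rw [← this]
      exact Submodule.subset_span ⟨u₀, hu₀U, rfl⟩


end DiscreteCalderon
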